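/- Let G be a group, A a finite alphabet, and X ⊆ A^G a G-SFT. Then there exist a finite subset F ⊆ G and an SFT Y on the subgroup H = ⟨F⟩ generated by F (i.e., Y ⊆ A^H is an H-SFT) such that X equals the free G-extension Y^↑G of Y. -/

import Mathlib

open scoped Pointwise symmDiff

namespace LFPaper

variable {G A B : Type*}

/-- The right shift action: `(shift g x) h = x (h * g)`. -/
def shift [Group G] (g : G) (x : G → A) : G → A := fun h => x (h * g)

/-- Restriction of a configuration to a finite shape. -/
def restrictF (F : Finset G) (x : G → A) : F → A := fun a => x a

/-- A `G`-shift space: a closed, shift-invariant subset of the full shift. -/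
def IsShiftSpace [Group G] [TopologicalSpace A] (X : Set (G → A)) : Prop :=
  IsClosed X ∧ ∀ g : G, ∀ x ∈ X, shift g x ∈ X

/-- A `G`-shift of finite type: the set of configurations avoiding a finite
set of forbidden patterns on a finite shape. -/
def IsSFT [Group G] (X : Set (G → A)) : Prop :=
  ∃ (F : Finset G) (P : Set (F → A)),
    X = {x : G → A | ∀ g : G, restrictF F (shift g x) ∉ P}

/-- The `F`-language of `X`: all restrictions of elements of `X` to `F`. -/
def language (X : Set (G → A)) (F : Finset G) : Set (F → A) :=
  {w | ∃ x ∈ X, restrictF F x = w}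

/-- Strong irreducibility of a shift. -/
def StronglyIrreducible [Group G] (X : Set (G → A)) : Prop :=
  ∃ K : Finset G, ∀ (Fu Fv : Finset G) (u : Fu → A) (v : Fv → A),
    Disjoint (Fu : Set G) ((K : Set G) * (Fv : Set G)) →
    u ∈ language X Fu → v ∈ language X Fv →
    ∃ x ∈ X, restrictF Fu x = u ∧ restrictF Fv x = v

/-- The free `G`-extension of an `H`-shift `Y`: all configurations whose
restriction to every right coset of `H` (pulled back to `H`) lies in `Y`. -/
def freeExt [Group G] (H : Subgroup G) (Y : Set (H → A)) : Set (G → A) :=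
  {x : G → A | ∀ g : G, (fun h : H => x ((h : G) * g)) ∈ Y}

/-- Local finiteness of a group: every finitely generated subgroup is finite. -/
def IsLocallyFinite (G : Type*) [Group G] : Prop :=
  ∀ S : Finset G, Finite ↥(Subgroup.closure (S : Set G))

/-- A (left) Følner sequence for a countable group. -/
def IsFolner [Group G] (F : ℕ → Finset G) : Prop :=
  (∀ n, (F n).Nonempty) ∧ (∀ g : G, ∃ n, g ∈ F n) ∧
  ∀ g : G, Filter.Tendsto
    (fun n => (Set.ncard ((((fun h => g * h) '' (F n : Set G))) ∆ ((F n : Set G))) : ℝ) /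
      ((F n).card : ℝ))
    Filter.atTop (nhds 0)

/-- Cardinality of the `F`-language. -/
noncomputable def langCard (X : Set (G → A)) (F : Finset G) : ℕ :=
  (language X F).ncard

/-- A shift-commuting self-homeomorphism of `X` (an automorphism of the shift `X`). -/
def IsAutomorphism [Group G] [TopologicalSpace A] (X : Set (G → A)) (φ : Equiv.Perm X) : Prop :=
  Continuous φ ∧ Continuous φ.symm ∧
  ∀ (g : G) (x y : X), (y : G → A) = shift g (x : G → A) →
    (φ y : G → A) = shift g ((φ x : G → A))

/-- Every `G`-SFT is the free extension of an SFT on a finitely generated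
subgroup of `G`. -/
theorem every_SFT_is_freeExt_of_fg_SFT [Group G] [Fintype A] [Nonempty A]
    (X : Set (G → A)) (hX : IsSFT X) :
    ∃ (F : Finset G) (Y : Set ((Subgroup.closure (F : Set G)) → A)),
      IsSFT Y ∧ X = freeExt (Subgroup.closure (F : Set G)) Y := by
  classical
  obtain ⟨F, P, hP⟩ := hX
  set H := Subgroup.closure (F : Set G) with hH
  let e : {f // f ∈ F} ↪ H :=
    ⟨fun f => ⟨f.1, Subgroup.subset_closure f.2⟩, fun a b hab =>
      Subtype.ext (congrArg (fun z : (Subgroup.closure (F : Set G)) => (z : G)) hab)⟩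
  let F' : Finset H := F.attach.map e
  have hmem' : ∀ f : {f // f ∈ F}, e f ∈ F' := fun f => Finset.mem_map_of_mem e (F.mem_attach f)
  let P' : Set ({a // a ∈ F'} → A) := {w | (fun f : {f // f ∈ F} => w ⟨e f, hmem' f⟩) ∈ P}
  refine ⟨F, {y : H → A | ∀ h : H, restrictF F' (shift h y) ∉ P'}, ⟨F', P', rfl⟩, ?_⟩
  ext x
  rw [hP]
  simp only [Set.mem_setOf_eq, freeExt]
  constructor
  · intro hx g h hw
    refine hx ((h : G) * g) ?_
    have heq : restrictF F (shift ((h : G) * g) x) =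
        (fun f : {f // f ∈ F} =>
          (restrictF F' (shift h (fun k : H => x ((k : G) * g)))) ⟨e f, hmem' f⟩) := by
      funext f
      simp only [restrictF, shift, e]
      rw [Subgroup.coe_mul, mul_assoc]
      rfl
    rw [heq]
    exact hw
  · intro hx g hw
    apply hx g 1
    have heq : (fun f : {f // f ∈ F} =>
        (restrictF F' (shift (1 : H) (fun k : H => x ((k : G) * g)))) ⟨e f, hmem' f⟩) =
        restrictF F (shift g x) := by
      funext f
      simp [restrictF, shift, e]
      rfl
    show _ ∈ P
    rw [heq]
    exact hw

end LFPaper
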